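/- The scaled truncated Gaussian activation λ_σ(α) = σ(α/σ + N(α/σ)/Φ(α/σ)) converges pointwise to the ReLU function max(α, 0) as σ → 0⁺. -/

import Mathlib

open Real MeasureTheory Filter

noncomputable def gaussPdf (x : ℝ) : ℝ := Real.exp (-x ^ 2 / 2) / Real.sqrt (2 * Real.pi)

noncomputable def gaussCdf (x : ℝ) : ℝ := ∫ t in Set.Iic x, gaussPdf t

lemma sqrt_two_pi_pos : 0 < Real.sqrt (2 * Real.pi) :=
  Real.sqrt_pos.2 (by positivity)

lemma gaussPdf_pos (x : ℝ) : 0 < gaussPdf x :=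
  div_pos (Real.exp_pos _) sqrt_two_pi_pos

lemma gaussPdf_cont : Continuous gaussPdf := by
  unfold gaussPdf
  fun_prop

lemma gaussPdf_integrable : Integrable gaussPdf := by
  have h : Integrable (fun x : ℝ => Real.exp (-(1/2 : ℝ) * x ^ 2)) :=
    integrable_exp_neg_mul_sq (by norm_num)
  have := h.div_const (Real.sqrt (2 * Real.pi))
  refine this.congr (by filter_upwards with x; unfold gaussPdf; ring_nf)

lemma hasDerivAt_gaussPdf (x : ℝ) : HasDerivAt gaussPdf (-x * gaussPdf x) x := by
  have h1 : HasDerivAt (fun x : ℝ => -x ^ 2 / 2) (-x) x := by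
    have := ((hasDerivAt_pow 2 x).neg).div_const 2
    refine this.congr_deriv ?_
    push_cast
    ring
  have h2 := (h1.exp).div_const (Real.sqrt (2 * Real.pi))
  refine h2.congr_deriv ?_
  unfold gaussPdf
  ring

/-- pdf is dominated by a multiple of `exp x`. -/
lemma gaussPdf_le (x : ℝ) :
    gaussPdf x ≤ Real.exp (1/2) / Real.sqrt (2 * Real.pi) * Real.exp x := by
  unfold gaussPdf
  rw [div_mul_eq_mul_div, ← Real.exp_add]
  apply div_le_div_of_nonneg_right _ sqrt_two_pi_pos.le
  apply Real.exp_le_exp.2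
  nlinarith [sq_nonneg (x + 1)]

lemma mul_exp_tendsto_atBot : Tendsto (fun x : ℝ => x * Real.exp x) atBot (nhds 0) := by
  have h : Tendsto (fun x : ℝ => -((-x) ^ 1 * Real.exp (-(-x)))) atBot (nhds (-0)) :=
    ((tendsto_pow_mul_exp_neg_atTop_nhds_zero 1).comp tendsto_neg_atBot_atTop).neg
  rw [neg_zero] at h
  exact h.congr fun x => by simp

lemma gaussPdf_tendsto_atBot : Tendsto gaussPdf atBot (nhds 0) := by
  have hexp : Tendsto (fun x : ℝ => Real.exp (1/2) / Real.sqrt (2 * Real.pi) * Real.exp x)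
      atBot (nhds 0) := by
    simpa using (Real.tendsto_exp_atBot.const_mul (Real.exp (1/2) / Real.sqrt (2 * Real.pi)))
  refine tendsto_of_tendsto_of_tendsto_of_le_of_le tendsto_const_nhds hexp
    (fun x => (gaussPdf_pos x).le) (fun x => gaussPdf_le x)

lemma mul_gaussPdf_tendsto_atBot : Tendsto (fun x => x * gaussPdf x) atBot (nhds 0) := by
  have hexp : Tendsto (fun x : ℝ => Real.exp (1/2) / Real.sqrt (2 * Real.pi) * (x * Real.exp x))
      atBot (nhds 0) := by
    simpa using mul_exp_tendsto_atBot.const_mul (Real.exp (1/2) / Real.sqrt (2 * Real.pi))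
  refine tendsto_of_tendsto_of_tendsto_of_le_of_le' hexp tendsto_const_nhds ?_ ?_
  · filter_upwards [eventually_le_atBot (0:ℝ)] with x hx
    have := gaussPdf_le x
    have hp := gaussPdf_pos x
    nlinarith
  · filter_upwards [eventually_le_atBot (0:ℝ)] with x hx
    have hp := (gaussPdf_pos x).le
    nlinarith

lemma gaussCdf_le (x : ℝ) :
    gaussCdf x ≤ Real.exp (1/2) / Real.sqrt (2 * Real.pi) * Real.exp x := by
  have h : gaussCdf x ≤ ∫ t in Set.Iic x,
      Real.exp (1/2) / Real.sqrt (2 * Real.pi) * Real.exp t := by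
    refine setIntegral_mono_on gaussPdf_integrable.integrableOn
      (((integrableOn_exp_Iic x).const_mul _)) measurableSet_Iic ?_
    intro t _
    exact gaussPdf_le t
  calc gaussCdf x ≤ _ := h
    _ = Real.exp (1/2) / Real.sqrt (2 * Real.pi) * Real.exp x := by
        rw [integral_const_mul, integral_exp_Iic]

lemma gaussCdf_nonneg (x : ℝ) : 0 ≤ gaussCdf x :=
  setIntegral_nonneg measurableSet_Iic (fun t _ => (gaussPdf_pos t).le)

lemma gaussCdf_pos (x : ℝ) : 0 < gaussCdf x := by
  rw [gaussCdf, setIntegral_pos_iff_support_of_nonneg_ae]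
  · have : Function.support gaussPdf = Set.univ := by
      ext t; simp [Function.support, (gaussPdf_pos t).ne']
    rw [this, Set.univ_inter]
    simp [Real.volume_Iic]
  · filter_upwards with t using (gaussPdf_pos t).le
  · exact gaussPdf_integrable.integrableOn

lemma gaussCdf_tendsto_atBot : Tendsto gaussCdf atBot (nhds 0) := by
  have hexp : Tendsto (fun x : ℝ => Real.exp (1/2) / Real.sqrt (2 * Real.pi) * Real.exp x)
      atBot (nhds 0) := by
    simpa using (Real.tendsto_exp_atBot.const_mul (Real.exp (1/2) / Real.sqrt (2 * Real.pi)))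
  exact tendsto_of_tendsto_of_tendsto_of_le_of_le tendsto_const_nhds hexp
    gaussCdf_nonneg gaussCdf_le

lemma mul_gaussCdf_tendsto_atBot : Tendsto (fun x => x * gaussCdf x) atBot (nhds 0) := by
  have hexp : Tendsto (fun x : ℝ => Real.exp (1/2) / Real.sqrt (2 * Real.pi) * (x * Real.exp x))
      atBot (nhds 0) := by
    simpa using mul_exp_tendsto_atBot.const_mul (Real.exp (1/2) / Real.sqrt (2 * Real.pi))
  refine tendsto_of_tendsto_of_tendsto_of_le_of_le' hexp tendsto_const_nhds ?_ ?_
  · filter_upwards [eventually_le_atBot (0:ℝ)] with x hx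
    have h1 := gaussCdf_le x
    have h2 := gaussCdf_nonneg x
    nlinarith
  · filter_upwards [eventually_le_atBot (0:ℝ)] with x hx
    have := gaussCdf_nonneg x
    nlinarith

lemma hasDerivAt_gaussCdf (x : ℝ) : HasDerivAt gaussCdf (gaussPdf x) x := by
  have key : ∀ y : ℝ, gaussCdf y = (∫ t in (0:ℝ)..y, gaussPdf t) + gaussCdf 0 := by
    intro y
    have := intervalIntegral.integral_Iic_sub_Iic
      (gaussPdf_integrable.integrableOn (s := Set.Iic 0))
      (gaussPdf_integrable.integrableOn (s := Set.Iic y))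
    rw [gaussCdf, gaussCdf, ← this]
    ring
  have h : HasDerivAt (fun y => (∫ t in (0:ℝ)..y, gaussPdf t) + gaussCdf 0) (gaussPdf x) x := by
    refine HasDerivAt.add_const _ ?_
    refine intervalIntegral.integral_hasDerivAt_right
      gaussPdf_integrable.intervalIntegrable
      (gaussPdf_cont.stronglyMeasurableAtFilter _ _) gaussPdf_cont.continuousAt
  exact h.congr_of_eventuallyEq (Filter.Eventually.of_forall fun y => key y)

lemma gaussCdf_mono : Monotone gaussCdf := by
  have : StrictMono gaussCdf := by
    apply strictMono_of_deriv_pos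
    intro x
    rw [(hasDerivAt_gaussCdf x).deriv]
    exact gaussPdf_pos x
  exact this.monotone

/-- Lower Mills bound: `-x * cdf x < pdf x` for all `x`. -/
lemma neg_mul_gaussCdf_lt (x : ℝ) : -x * gaussCdf x < gaussPdf x := by
  set h : ℝ → ℝ := fun x => x * gaussCdf x + gaussPdf x with hh
  have hderiv : ∀ y, HasDerivAt h (gaussCdf y) y := by
    intro y
    have h1 := ((hasDerivAt_id y).mul (hasDerivAt_gaussCdf y)).add (hasDerivAt_gaussPdf y)
    simp only [id_eq, one_mul] at h1
    refine h1.congr_deriv ?_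
    ring
  have hmono : StrictMono h := by
    apply strictMono_of_deriv_pos
    intro y
    rw [(hderiv y).deriv]
    exact gaussCdf_pos y
  have hlim : Tendsto h atBot (nhds 0) := by
    have := mul_gaussCdf_tendsto_atBot.add gaussPdf_tendsto_atBot
    simpa using this
  have hx : 0 ≤ h (x - 1) := by
    refine le_of_tendsto hlim ?_
    filter_upwards [eventually_le_atBot (x - 1)] with y hy
    exact (hmono.le_iff_le).2 hy
  have : 0 < h x := lt_of_le_of_lt hx (hmono (by linarith))
  simp only [hh] at this
  nlinarith [this]

set_option maxHeartbeats 1000000 in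
/-- Upper Mills bound: `cdf x > -x/(x^2+1) * pdf x` for all `x`. -/
lemma gaussCdf_gt (x : ℝ) : -x / (x ^ 2 + 1) * gaussPdf x < gaussCdf x := by
  set g : ℝ → ℝ := fun x => gaussCdf x + x / (x ^ 2 + 1) * gaussPdf x with hg
  have hderiv : ∀ y, HasDerivAt g (2 / (y ^ 2 + 1) ^ 2 * gaussPdf y) y := by
    intro y
    have hden : (y : ℝ) ^ 2 + 1 ≠ 0 := by positivity
    have h0 : HasDerivAt (fun y : ℝ => y / (y ^ 2 + 1))
        ((1 * (y ^ 2 + 1) - y * (2 * y)) / (y ^ 2 + 1) ^ 2) y := by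
      refine (hasDerivAt_id y).div ?_ hden
      have := (hasDerivAt_pow 2 y).add_const 1
      simpa using this
    have h1 := (hasDerivAt_gaussCdf y).add (h0.mul (hasDerivAt_gaussPdf y))
    refine h1.congr_deriv ?_
    field_simp
    ring
  have hmono : StrictMono g := by
    apply strictMono_of_deriv_pos
    intro y
    rw [(hderiv y).deriv]
    have := gaussPdf_pos y
    positivity
  have hlim : Tendsto g atBot (nhds 0) := by
    have h2 : Tendsto (fun y : ℝ => y / (y ^ 2 + 1) * gaussPdf y) atBot (nhds 0) := by
      have hb : Tendsto (fun y : ℝ => ((y:ℝ) ^ 2 + 1)⁻¹) atBot (nhds 0) := by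
        apply Tendsto.inv_tendsto_atTop
        have hp : Tendsto (fun y : ℝ => (-y) ^ 2) atBot atTop :=
          (tendsto_pow_atTop (α := ℝ) (n := 2) (by norm_num)).comp tendsto_neg_atBot_atTop
        have hp2 : Tendsto (fun y : ℝ => y ^ 2) atBot atTop :=
          hp.congr (fun y => by simp)
        exact hp2.atTop_add tendsto_const_nhds
      have := mul_gaussPdf_tendsto_atBot.mul hb
      simp only [mul_zero] at this
      refine this.congr (fun y => by rw [div_mul_eq_mul_div, div_eq_mul_inv])
    have := gaussCdf_tendsto_atBot.add h2
    simpa using this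
  have hx : 0 ≤ g (x - 1) := by
    refine le_of_tendsto hlim ?_
    filter_upwards [eventually_le_atBot (x - 1)] with y hy
    exact (hmono.le_iff_le).2 hy
  have : 0 < g x := lt_of_le_of_lt hx (hmono (by linarith))
  simp only [hg] at this
  have : -(x / (x ^ 2 + 1) * gaussPdf x) < gaussCdf x := by linarith
  calc -x / (x ^ 2 + 1) * gaussPdf x = -(x / (x ^ 2 + 1) * gaussPdf x) := by ring
    _ < gaussCdf x := this

theorem scaled_tg_activation_tendsto_relu (α : ℝ) :
    Filter.Tendsto
      (fun σ : ℝ => σ * (α / σ + gaussPdf (α / σ) / gaussCdf (α / σ)))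
      (nhdsWithin 0 (Set.Ioi 0)) (nhds (max α 0)) := by
  have hmem : ∀ᶠ σ in nhdsWithin (0:ℝ) (Set.Ioi 0), σ ∈ Set.Ioi (0:ℝ) :=
    eventually_mem_nhdsWithin
  have hid : Tendsto (fun σ : ℝ => σ) (nhdsWithin 0 (Set.Ioi 0)) (nhds 0) :=
    tendsto_id.mono_left nhdsWithin_le_nhds
  rcases le_or_gt 0 α with hα | hα
  · -- α ≥ 0 : limit is α
    rw [max_eq_left hα]
    have key : Tendsto (fun σ : ℝ => σ * (gaussPdf (α/σ) / gaussCdf (α/σ)))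
        (nhdsWithin 0 (Set.Ioi 0)) (nhds 0) := by
      have hupper : Tendsto (fun σ : ℝ => σ * (gaussPdf 0 / gaussCdf 0))
          (nhdsWithin 0 (Set.Ioi 0)) (nhds 0) := by
        simpa using hid.mul_const (gaussPdf 0 / gaussCdf 0)
      refine tendsto_of_tendsto_of_tendsto_of_le_of_le' tendsto_const_nhds hupper ?_ ?_
      · filter_upwards [hmem] with σ hσ
        have hσ' : (0:ℝ) < σ := hσ
        have h1 := (gaussPdf_pos (α/σ)).le
        have h2 := (gaussCdf_pos (α/σ)).le
        positivity
      · filter_upwards [hmem] with σ hσ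
        have hσ' : (0:ℝ) < σ := hσ
        have hx : (0:ℝ) ≤ α / σ := div_nonneg hα hσ'.le
        have h1 : gaussPdf (α/σ) ≤ gaussPdf 0 := by
          unfold gaussPdf
          apply div_le_div_of_nonneg_right _ sqrt_two_pi_pos.le
          apply Real.exp_le_exp.2
          nlinarith [sq_nonneg (α/σ)]
        have h2 : gaussCdf 0 ≤ gaussCdf (α/σ) := gaussCdf_mono hx
        have h3 : gaussPdf (α/σ) / gaussCdf (α/σ) ≤ gaussPdf 0 / gaussCdf 0 := by
          apply div_le_div₀ (gaussPdf_pos 0).le h1 (gaussCdf_pos 0) h2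
        exact mul_le_mul_of_nonneg_left h3 hσ'.le
    have : Tendsto (fun σ : ℝ => α + σ * (gaussPdf (α/σ) / gaussCdf (α/σ)))
        (nhdsWithin 0 (Set.Ioi 0)) (nhds α) := by
      simpa using (tendsto_const_nhds (x := α)).add key
    refine this.congr' ?_
    filter_upwards [hmem] with σ hσ
    have hσ' : (0:ℝ) < σ := hσ
    field_simp
  · -- α < 0 : limit is 0
    rw [max_eq_right hα.le]
    have hupper : Tendsto (fun σ : ℝ => σ ^ 2 / (-α)) (nhdsWithin 0 (Set.Ioi 0)) (nhds 0) := by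
      have := ((hid.mul hid).div_const (-α))
      simpa [sq] using this
    refine tendsto_of_tendsto_of_tendsto_of_le_of_le' tendsto_const_nhds hupper ?_ ?_
    · -- lower bound 0
      filter_upwards [hmem] with σ hσ
      have hσ' : (0:ℝ) < σ := hσ
      generalize hxdef : α / σ = x
      have hx : x < 0 := hxdef ▸ div_neg_of_neg_of_pos hα hσ'
      have hcdf := gaussCdf_pos x
      have hmills := neg_mul_gaussCdf_lt x
      have hr : -x < gaussPdf x / gaussCdf x := (lt_div_iff₀ hcdf).2 hmills
      have h2 : σ * (-x) < σ * (gaussPdf x / gaussCdf x) :=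
        (mul_lt_mul_iff_right₀ hσ').2 hr
      have h3 : σ * (-x) = -α := by
        rw [← hxdef]; field_simp
      nlinarith
    · -- upper bound σ²/(-α)
      filter_upwards [hmem] with σ hσ
      have hσ' : (0:ℝ) < σ := hσ
      have hσne : σ ≠ 0 := hσ'.ne'
      have hsplit : σ * (α / σ + gaussPdf (α/σ) / gaussCdf (α/σ))
          = α + σ * (gaussPdf (α/σ) / gaussCdf (α/σ)) := by
        rw [mul_add, mul_div_cancel₀ _ hσne]
      rw [hsplit]
      generalize hxdef : α / σ = x
      have hx : x < 0 := hxdef ▸ div_neg_of_neg_of_pos hα hσ'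
      have hcdf := gaussCdf_pos x
      have hmills := gaussCdf_gt x
      have hden : (0:ℝ) < x ^ 2 + 1 := by positivity
      have hr : gaussPdf x / gaussCdf x < (x ^ 2 + 1) / (-x) := by
        rw [div_lt_div_iff₀ hcdf (by linarith : (0:ℝ) < -x)]
        have h := (mul_lt_mul_iff_left₀ (show (0:ℝ) < x^2+1 from hden)).2 hmills
        calc gaussPdf x * -x = (-x / (x^2+1) * gaussPdf x) * (x^2+1) := by
              rw [div_mul_eq_mul_div, div_mul_cancel₀ _ hden.ne']; ring
          _ < gaussCdf x * (x^2+1) := h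
          _ = (x^2+1) * gaussCdf x := by ring
      have h2 : σ * (gaussPdf x / gaussCdf x) < σ * ((x ^ 2 + 1) / (-x)) :=
        (mul_lt_mul_iff_right₀ hσ').2 hr
      have h3 : σ * ((x ^ 2 + 1) / (-x)) = -α + σ ^ 2 / (-α) := by
        rw [← hxdef]
        rw [show ((α/σ)^2+1 : ℝ) = (α^2+σ^2)/σ^2 from by field_simp,
          show -(α/σ) = (α * -σ)/σ^2 from by rw [pow_two]; field_simp,
          div_div_div_cancel_right₀ (by positivity : (σ:ℝ)^2 ≠ 0)]
        field_simp [hα.ne]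
        ring
      linarith [h2, h3.le]
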